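/- arXiv:1503.04045 — 5 statements merged into one kernel-verified Lean document; each statement's English description precedes it below -/
import Mathlib

section
/- Let δ : Σ → {a,b}* map each symbol α injectively to b a^{i(α)} b with i(α) ≥ 1, extended homomorphically. Then for any string S over Σ, every palindromic substring of δ(S) of the form (b a^+ b)^+ (i.e., a concatenation of blocks b a^i b) is the image δ(P) of some palindromic substring P of S. -/
def blockBA (j : ℕ) : List Bool := true :: (List.replicate j false ++ [true])

def encBA {σ : Type*} (i : σ → ℕ) (w : List σ) : List Bool :=
  (w.map fun s => blockBA (i s)).flatten

private lemma repl_cons_eq {b c : ℕ} {X Y : List Bool}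
    (h : List.replicate b false ++ true :: X = List.replicate c false ++ true :: Y) :
    b = c ∧ X = Y := by
  induction b generalizing c with
  | zero =>
    cases c with
    | zero => simpa using h
    | succ c => simp [List.replicate_succ] at h
  | succ b ih =>
    cases c with
    | zero => simp [List.replicate_succ] at h
    | succ c =>
      simp only [List.replicate_succ, List.cons_append, List.cons.injEq, true_and] at h
      obtain ⟨h1, h2⟩ := ih h
      exact ⟨by omega, h2⟩

private lemma blockBA_reverse (j : ℕ) : (blockBA j).reverse = blockBA j := by
  simp [blockBA]

private lemma join_prefix : ∀ (bs cs : List ℕ) (t : List Bool),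
    (bs.map blockBA).flatten ++ t = (cs.map blockBA).flatten → bs <+: cs := by
  intro bs
  induction bs with
  | nil => intro cs t _; exact cs.nil_prefix
  | cons b bs ih =>
    intro cs t h
    cases cs with
    | nil => simp [blockBA] at h
    | cons c cs =>
      simp only [List.map_cons, List.flatten_cons, List.append_assoc, blockBA,
        List.cons_append, List.cons.injEq, true_and, List.nil_append,
        List.singleton_append] at h
      obtain ⟨hbc, h2⟩ := repl_cons_eq h
      subst hbc
      exact List.cons_prefix_cons.mpr ⟨rfl, ih cs t h2⟩

private lemma join_infix : ∀ (cs : List ℕ), (∀ j ∈ cs, 1 ≤ j) →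
    ∀ (bs : List ℕ), (∀ j ∈ bs, 1 ≤ j) → bs ≠ [] →
    ∀ (s t : List Bool), s ++ (bs.map blockBA).flatten ++ t = (cs.map blockBA).flatten →
    bs <:+: cs := by
  intro cs
  induction cs with
  | nil =>
    intro _ bs hbs hne s t h
    cases bs with
    | nil => exact absurd rfl hne
    | cons b bs => simp [blockBA] at h
  | cons c cs ih =>
    intro hcs bs hbs hne s t h
    cases bs with
    | nil => exact absurd rfl hne
    | cons b bs =>
    by_cases hs : s = []
    · subst hs
      exact (join_prefix (b :: bs) (c :: cs) t (by simpa using h)).isInfix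
    · -- s is nonempty
      have hspre : s <+: (blockBA c) ++ (cs.map blockBA).flatten := by
        refine ⟨(((b :: bs).map blockBA).flatten) ++ t, ?_⟩
        rw [← List.append_assoc, h]; simp
      by_cases hlen : (blockBA c).length ≤ s.length
      · -- strip the first block
        have hbpre : blockBA c <+: s :=
          List.prefix_of_prefix_length_le ⟨(cs.map blockBA).flatten, rfl⟩ hspre hlen
        obtain ⟨s', rfl⟩ := hbpre
        have h2 : s' ++ ((b :: bs).map blockBA).flatten ++ t = (cs.map blockBA).flatten := by
          have := h
          simp only [List.map_cons, List.flatten_cons, List.append_assoc] at this ⊢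
          exact List.append_cancel_left this
        exact List.infix_cons (ih (fun j hj => hcs j (List.mem_cons_of_mem _ hj))
          (b :: bs) hbs hne s' t h2)
      · -- s is a proper nonempty prefix of blockBA c : contradiction
        push_neg at hlen
        have hspre2 : s <+: blockBA c :=
          List.prefix_of_prefix_length_le hspre ⟨(cs.map blockBA).flatten, rfl⟩ hlen.le
        obtain ⟨r, hr⟩ := hspre2
        have hrdrop : r = (blockBA c).drop s.length := by
          rw [← hr, List.drop_left]
        obtain ⟨x, s', rfl⟩ : ∃ x s', s = x :: s' := by
          cases s with
          | nil => exact absurd rfl hs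
          | cons x s' => exact ⟨x, s', rfl⟩
        have hslen : s'.length + 1 ≤ c + 1 := by
          have hbl : (blockBA c).length = c + 2 := by simp [blockBA]
          simp only [List.length_cons] at hlen
          omega
        have hrval : r = List.replicate (c - s'.length) false ++ [true] := by
          rw [hrdrop]
          simp only [blockBA, List.length_cons, List.drop_succ_cons]
          rw [List.drop_append_of_le_length (by simp; omega), List.drop_replicate]
        -- equation after cancelling s
        have heq : ((b :: bs).map blockBA).flatten ++ t = r ++ (cs.map blockBA).flatten := by
          have h' : (x :: s') ++ (((b :: bs).map blockBA).flatten ++ t)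
              = (x :: s') ++ (r ++ (cs.map blockBA).flatten) := by
            rw [← List.append_assoc, h]
            simp only [List.map_cons, List.flatten_cons]
            rw [← hr, List.append_assoc]
          exact List.append_cancel_left h'
        have hb : 1 ≤ b := hbs b List.mem_cons_self
        obtain ⟨b0, rfl⟩ : ∃ b0, b = b0 + 1 := ⟨b - 1, by omega⟩
        rcases Nat.eq_zero_or_pos (c - s'.length) with hm | hm
        · -- r = [true]
          rw [hrval, hm] at heq
          simp only [List.replicate_zero, List.nil_append, List.map_cons, List.flatten_cons,
            blockBA, List.replicate_succ, List.cons_append, List.singleton_append,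
            List.cons.injEq] at heq
          obtain ⟨-, heq⟩ := heq
          cases cs with
          | nil => simp at heq
          | cons c' cs' => simp [blockBA] at heq
        · -- r starts with false
          obtain ⟨m0, hm0⟩ : ∃ m0, c - s'.length = m0 + 1 := ⟨c - s'.length - 1, by omega⟩
          rw [hrval, hm0] at heq
          simp [blockBA, List.replicate_succ] at heq

private lemma join_inj {bs cs : List ℕ}
    (h : (bs.map blockBA).flatten = (cs.map blockBA).flatten) : bs = cs := by
  have h1 : bs <+: cs := join_prefix bs cs [] (by simpa using h)
  have h2 : cs <+: bs := join_prefix cs bs [] (by simpa using h.symm)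
  exact h1.sublist.antisymm h2.sublist

/-- Every palindromic substring of `δ(S)` of the form `(b a^+ b)^+` is the image under
`δ` of a palindromic substring of `S`. -/
theorem stmt7 {σ : Type*} (i : σ → ℕ) (hinj : Function.Injective i)
    (hpos : ∀ s, 1 ≤ i s) (S : List σ) (w : List Bool)
    (hinf : w <:+: encBA i S) (hpal : w.reverse = w)
    (hform : ∃ blocks : List ℕ, blocks ≠ [] ∧ (∀ j ∈ blocks, 1 ≤ j) ∧
      w = (blocks.map blockBA).flatten) :
    ∃ P : List σ, P <:+: S ∧ P.reverse = P ∧ w = encBA i P := by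
  obtain ⟨blocks, hne, hbpos, hw⟩ := hform
  obtain ⟨s, t, hst⟩ := hinf
  have hw' : w = (blocks.map blockBA).flatten := hw
  have henc : encBA i S = ((S.map i).map blockBA).flatten := by
    show (S.map fun s => blockBA (i s)).flatten = _
    rw [List.map_map]
    rfl
  rw [hw', henc] at hst
  have hinfix : blocks <:+: S.map i :=
    join_infix (S.map i) (by simp only [List.mem_map]; rintro a ⟨x, -, rfl⟩; exact hpos x)
      blocks hbpos hne s t hst
  -- extract P
  obtain ⟨u, v, huv⟩ := hinfix
  have hblocks : blocks = (S.drop u.length |>.take blocks.length).map i := by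
    rw [List.map_take, List.map_drop]
    have h1 : (S.map i).drop u.length = blocks ++ v := by
      rw [← huv, List.append_assoc, List.drop_left]
    rw [h1, List.take_left]
  set P := S.drop u.length |>.take blocks.length with hP
  have hPinf : P <:+: S :=
    ((S.drop u.length).take_prefix blocks.length).isInfix.trans
      (S.drop_suffix u.length).isInfix
  -- palindrome
  have hrev : (blocks.reverse.map blockBA).flatten = (blocks.map blockBA).flatten := by
    have key : ((blocks.map blockBA).flatten).reverse = (blocks.reverse.map blockBA).flatten := by
      rw [List.reverse_flatten, List.map_reverse, List.map_map]
      simp [Function.comp_def, blockBA_reverse]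
    rw [← key, ← hw', hpal, hw']
  have hbrev : blocks.reverse = blocks := join_inj hrev
  have hPrev : P.reverse = P := by
    have hmap : (P.reverse).map i = P.map i := by
      rw [List.map_reverse, ← hblocks, hbrev, hblocks]
    exact List.map_injective_iff.mpr hinj hmap
  refine ⟨P, hPinf, hPrev, ?_⟩
  show w = (P.map fun s => blockBA (i s)).flatten
  rw [hw', hblocks, List.map_map]
  rfl
end

section
/- Let δ : Σ → {a,b}* map each symbol injectively to b a^i b (i ≥ 1), extended homomorphically. For any string S over Σ, every diverse palindromic factorization of δ(S) consists entirely of images δ(P) of palindromes P, i.e., it is obtained by applying δ factorwise to a diverse palindromic factorization of S. -/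
/-- `F` is a diverse palindromic factorization of `S`. -/
def DivPalFact {α : Type*} (S : List α) (F : List (List α)) : Prop :=
  F.flatten = S ∧ (∀ f ∈ F, f ≠ [] ∧ f.reverse = f) ∧ F.Nodup

namespace Stmt8Aux

variable {σ : Type*}

lemma encBA_nil (i : σ → ℕ) : encBA i ([] : List σ) = [] := rfl

lemma encBA_cons (i : σ → ℕ) (s : σ) (w : List σ) :
    encBA i (s :: w) = true :: (List.replicate (i s) false ++ ([true] ++ encBA i w)) := by
  simp [encBA, blockBA]

lemma encBA_append (i : σ → ℕ) (u v : List σ) :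
    encBA i (u ++ v) = encBA i u ++ encBA i v := by
  simp [encBA]

lemma blockBA_reverse (j : ℕ) : (blockBA j).reverse = blockBA j := by
  simp [blockBA, List.reverse_append]

lemma encBA_reverse (i : σ → ℕ) (w : List σ) :
    (encBA i w).reverse = encBA i w.reverse := by
  induction w with
  | nil => rfl
  | cons s w ih =>
      have h1 : encBA i (s :: w) = encBA i [s] ++ encBA i w := by
        rw [← encBA_append]; rfl
      rw [h1, List.reverse_append, ih]
      have h2 : encBA i ([s] : List σ) = blockBA (i s) := by
        simp [encBA]
      rw [h2, blockBA_reverse, List.reverse_cons, encBA_append]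
      congr 1
      simp [encBA]

lemma rep_true_eq {a b : ℕ} {X Y : List Bool}
    (h : List.replicate a false ++ (true :: X) = List.replicate b false ++ (true :: Y)) :
    a = b ∧ X = Y := by
  induction a generalizing b with
  | zero =>
      cases b with
      | zero => simpa using h
      | succ b => simp [List.replicate_succ] at h
  | succ a ih =>
      cases b with
      | zero => simp [List.replicate_succ] at h
      | succ b =>
          simp only [List.replicate_succ, List.cons_append, List.cons.injEq] at h
          obtain ⟨ha, hX⟩ := ih h.2
          exact ⟨by omega, hX⟩

lemma encBA_inj (i : σ → ℕ) (hinj : Function.Injective i) :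
    Function.Injective (encBA i) := by
  intro u v h
  induction u generalizing v with
  | nil =>
      cases v with
      | nil => rfl
      | cons t v => rw [encBA_nil, encBA_cons] at h; exact absurd h (by simp)
  | cons s u ih =>
      cases v with
      | nil => rw [encBA_nil, encBA_cons] at h; exact absurd h (by simp)
      | cons t v =>
          rw [encBA_cons, encBA_cons] at h
          simp only [List.cons.injEq, true_and] at h
          obtain ⟨hst, huv⟩ := rep_true_eq (by simpa using h)
          rw [hinj hst, ih huv]

lemma split_cons {x : Bool} {f T M : List Bool} (hf : f ≠ []) (h : f ++ T = x :: M) :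
    ∃ f₁, f = x :: f₁ ∧ f₁ ++ T = M := by
  cases f with
  | nil => exact absurd rfl hf
  | cons y f₁ =>
      simp only [List.cons_append, List.cons.injEq] at h
      exact ⟨f₁, by rw [h.1], h.2⟩

lemma split_rep {q : ℕ} {f T M : List Bool}
    (h : f ++ T = List.replicate q false ++ M) :
    (∃ t, t ≤ q ∧ f = List.replicate t false ∧ T = List.replicate (q - t) false ++ M) ∨
    (∃ f₂, f₂ ≠ [] ∧ f = List.replicate q false ++ f₂ ∧ f₂ ++ T = M) := by
  induction q generalizing f with
  | zero =>
      rcases eq_or_ne f [] with rfl | hf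
      · exact Or.inl ⟨0, le_refl _, rfl, by simpa using h⟩
      · exact Or.inr ⟨f, hf, by simp, by simpa using h⟩
  | succ q ih =>
      cases f with
      | nil =>
          exact Or.inl ⟨0, by omega, rfl, by simpa using h⟩
      | cons y f' =>
          rw [List.replicate_succ] at h
          simp only [List.cons_append, List.cons.injEq] at h
          obtain ⟨rfl, h'⟩ := h
          rcases ih h' with ⟨t, ht, rfl, hT⟩ | ⟨f₂, hf₂, rfl, h2⟩
          · refine Or.inl ⟨t + 1, by omega, by rw [List.replicate_succ], ?_⟩
            have : q + 1 - (t + 1) = q - t := by omega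
            rw [this]; exact hT
          · exact Or.inr ⟨f₂, hf₂, by simp [List.replicate_succ], h2⟩

lemma master (i : σ → ℕ) (hpos : ∀ s, 1 ≤ i s) :
    ∀ (R : List σ) (f T : List Bool), f ++ T = encBA i R → f ≠ [] →
    (∃ P R', R = P ++ R' ∧ P ≠ [] ∧ f = encBA i P ∧ T = encBA i R') ∨
    (∃ P s R', R = P ++ s :: R' ∧ f = encBA i P ++ [true] ∧
        T = List.replicate (i s) false ++ ([true] ++ encBA i R')) ∨
    (∃ P s R' t, R = P ++ s :: R' ∧ 1 ≤ t ∧ t ≤ i s ∧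
        f = encBA i P ++ ([true] ++ List.replicate t false) ∧
        T = List.replicate (i s - t) false ++ ([true] ++ encBA i R')) := by
  intro R
  induction R with
  | nil =>
      intro f T h hf
      rw [encBA_nil] at h
      exact absurd (List.append_eq_nil_iff.mp h).1 hf
  | cons s R₁ ih =>
      intro f T h hf
      rw [encBA_cons] at h
      obtain ⟨f₁, rfl, h1⟩ := split_cons hf h
      rcases split_rep h1 with ⟨t, ht, rfl, hT⟩ | ⟨f₂, hf₂, rfl, h2⟩
      · rcases Nat.eq_zero_or_pos t with rfl | htpos
        · refine Or.inr (Or.inl ⟨[], s, R₁, rfl, by simp [encBA_nil], ?_⟩)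
          simpa using hT
        · exact Or.inr (Or.inr ⟨[], s, R₁, t, rfl, htpos, ht,
            by simp [encBA_nil], hT⟩)
      · obtain ⟨f₃, rfl, h3⟩ := split_cons hf₂ h2
        rcases eq_or_ne f₃ [] with rfl | hf₃
        · refine Or.inl ⟨[s], R₁, rfl, by simp, ?_, by simpa using h3⟩
          simp [encBA_cons, encBA_nil]
        · rcases ih f₃ T h3 hf₃ with ⟨P, R', rfl, hPne, rfl, hT⟩ |
            ⟨P, s', R', rfl, rfl, hT⟩ | ⟨P, s', R', t, rfl, ht1, ht2, rfl, hT⟩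
          · refine Or.inl ⟨s :: P, R', rfl, by simp, ?_, hT⟩
            simp [encBA_cons]
          · refine Or.inr (Or.inl ⟨s :: P, s', R', rfl, ?_, hT⟩)
            simp [encBA_cons]
          · refine Or.inr (Or.inr ⟨s :: P, s', R', t, rfl, ht1, ht2, ?_, hT⟩)
            simp [encBA_cons]

lemma pal_first_last {f : List Bool} {x y : Bool} {A B : List Bool}
    (hp : f.reverse = f) (h1 : f = x :: A) (h2 : f = B ++ [y]) : x = y := by
  have hr : f.reverse = y :: B.reverse := by rw [h2]; simp
  rw [hp, h1] at hr
  exact (List.cons.injEq _ _ _ _ ▸ hr).1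

lemma pal_two {f : List Bool} {x₁ x₂ y₂ y₁ : Bool} {A B : List Bool}
    (hp : f.reverse = f) (h1 : f = x₁ :: x₂ :: A) (h2 : f = B ++ [y₂, y₁]) :
    x₁ = y₁ ∧ x₂ = y₂ := by
  have hr : f.reverse = y₁ :: y₂ :: B.reverse := by rw [h2]; simp
  rw [hp, h1] at hr
  simp only [List.cons.injEq] at hr
  exact ⟨hr.1, hr.2.1⟩

lemma encBA_ends (i : σ → ℕ) (hpos : ∀ s, 1 ≤ i s) :
    ∀ P : List σ, P ≠ [] → ∃ W, encBA i P = W ++ [false, true] := by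
  intro P hP
  induction P with
  | nil => exact absurd rfl hP
  | cons p P ih =>
      cases P with
      | nil =>
          obtain ⟨k, hk⟩ : ∃ k, i p = k + 1 := ⟨i p - 1, by have := hpos p; omega⟩
          refine ⟨true :: List.replicate k false, ?_⟩
          rw [encBA_cons, hk, List.replicate_succ']
          simp [encBA_nil]
      | cons p' P' =>
          obtain ⟨W, hW⟩ := ih (by simp)
          refine ⟨blockBA (i p) ++ W, ?_⟩
          have : encBA i (p :: p' :: P') = blockBA (i p) ++ encBA i (p' :: P') := by
            simp [encBA]
          rw [this, hW, List.append_assoc]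

lemma encBA_starts (i : σ → ℕ) (hpos : ∀ s, 1 ≤ i s) (p : σ) (P' : List σ) :
    ∃ X, encBA i (p :: P') = true :: false :: X := by
  obtain ⟨k, hk⟩ : ∃ k, i p = k + 1 := ⟨i p - 1, by have := hpos p; omega⟩
  refine ⟨List.replicate k false ++ ([true] ++ encBA i P'), ?_⟩
  rw [encBA_cons, hk, List.replicate_succ]
  simp

lemma aligned_step (i : σ → ℕ) (hpos : ∀ s, 1 ≤ i s) {S : List σ} {f T : List Bool}
    (h : f ++ T = encBA i S) (hf : f ≠ []) (hpal : f.reverse = f) :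
    f = [true] ∨ ∃ P S', S = P ++ S' ∧ P ≠ [] ∧ f = encBA i P ∧ T = encBA i S' := by
  -- f starts with true
  have hS : S ≠ [] := by
    rintro rfl
    rw [encBA_nil] at h
    exact hf (List.append_eq_nil_iff.mp h).1
  obtain ⟨s₀, S₀, rfl⟩ := List.exists_cons_of_ne_nil hS
  have hhead : ∃ f₁, f = true :: f₁ := by
    rw [encBA_cons] at h
    obtain ⟨f₁, hf₁, _⟩ := split_cons hf h
    exact ⟨f₁, hf₁⟩
  obtain ⟨f₁, hf₁⟩ := hhead
  rcases master i hpos _ f T h hf with ⟨P, R', hR, hPne, rfl, hT⟩ |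
      ⟨P, s, R', hR, hfe, hT⟩ | ⟨P, s, R', t, hR, ht1, ht2, hfe, hT⟩
  · exact Or.inr ⟨P, R', hR, hPne, rfl, hT⟩
  · rcases eq_or_ne P [] with rfl | hPne
    · left; simpa [encBA_nil] using hfe
    · exfalso
      obtain ⟨W, hW⟩ := encBA_ends i hpos P hPne
      obtain ⟨p, P', rfl⟩ := List.exists_cons_of_ne_nil hPne
      obtain ⟨X, hX⟩ := encBA_starts i hpos p P'
      have h2 : f = (W ++ [false]) ++ [true, true] := by
        rw [hfe, hW]; simp
      have h1 : f = true :: false :: (X ++ [true]) := by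
        rw [hfe, hX]; simp
      have := (pal_two hpal h1 h2).2
      simp at this
  · exfalso
    obtain ⟨k, hk⟩ : ∃ k, t = k + 1 := ⟨t - 1, by omega⟩
    have h2 : f = (encBA i P ++ ([true] ++ List.replicate k false)) ++ [false] := by
      rw [hfe, hk, List.replicate_succ']
      simp
    have := pal_first_last hpal hf₁ h2
    simp at this

lemma mis_step (i : σ → ℕ) (hpos : ∀ s, 1 ≤ i s) {q : ℕ} {R : List σ} {f T : List Bool}
    (h : f ++ T = List.replicate q false ++ ([true] ++ encBA i R))
    (hf : f ≠ []) (hpal : f.reverse = f) :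
    f = [true] ∨ ∃ q' R', T = List.replicate q' false ++ ([true] ++ encBA i R') := by
  rcases split_rep h with ⟨t, ht, rfl, hT⟩ | ⟨f₂, hf₂ne, rfl, h2⟩
  · exact Or.inr ⟨q - t, R, hT⟩
  · obtain ⟨f₃, rfl, h3⟩ := split_cons hf₂ne h2
    rcases Nat.eq_zero_or_pos q with rfl | hq
    · -- f = true :: f₃
      have hf0 : List.replicate 0 false ++ (true :: f₃) = true :: f₃ := by simp
      rcases eq_or_ne f₃ [] with rfl | hf₃
      · left; simp
      · rcases master i hpos R f₃ T h3 hf₃ with ⟨P, R', hR, hPne, rfl, hT⟩ |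
          ⟨P, s, R', hR, rfl, hT⟩ | ⟨P, s, R', t, hR, ht1, ht2, rfl, hT⟩
        · exfalso
          obtain ⟨W, hW⟩ := encBA_ends i hpos P hPne
          obtain ⟨p, P', rfl⟩ := List.exists_cons_of_ne_nil hPne
          obtain ⟨X, hX⟩ := encBA_starts i hpos p P'
          have h1 : List.replicate 0 false ++ (true :: encBA i (p :: P'))
              = true :: true :: (false :: X) := by rw [hX]; simp
          have h2 : List.replicate 0 false ++ (true :: encBA i (p :: P'))
              = (true :: W) ++ [false, true] := by rw [hW]; simp
          have := (pal_two hpal h1 h2).2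
          simp at this
        · exact Or.inr ⟨i s, R', hT⟩
        · exact Or.inr ⟨i s - t, R', hT⟩
    · -- q ≥ 1, f starts with false
      obtain ⟨m, rfl⟩ : ∃ m, q = m + 1 := ⟨q - 1, by omega⟩
      have h1 : List.replicate (m+1) false ++ (true :: f₃)
          = false :: (List.replicate m false ++ (true :: f₃)) := by
        rw [List.replicate_succ]; simp
      rcases eq_or_ne f₃ [] with rfl | hf₃
      · exfalso
        have h2 : List.replicate (m+1) false ++ (true :: ([] : List Bool))
            = List.replicate (m+1) false ++ [true] := by simp
        have := pal_first_last hpal h1 h2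
        simp at this
      · rcases master i hpos R f₃ T h3 hf₃ with ⟨P, R', hR, hPne, rfl, hT⟩ |
          ⟨P, s, R', hR, rfl, hT⟩ | ⟨P, s, R', t, hR, ht1, ht2, rfl, hT⟩
        · exfalso
          obtain ⟨W, hW⟩ := encBA_ends i hpos P hPne
          have h2 : List.replicate (m+1) false ++ (true :: encBA i P)
              = (List.replicate (m+1) false ++ (true :: (W ++ [false]))) ++ [true] := by
            rw [hW]; simp
          have := pal_first_last hpal h1 h2
          simp at this
        · exfalso
          have h2 : List.replicate (m+1) false ++ (true :: (encBA i P ++ [true]))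
              = (List.replicate (m+1) false ++ (true :: encBA i P)) ++ [true] := by
            simp
          have := pal_first_last hpal h1 h2
          simp at this
        · exact Or.inr ⟨i s - t, R', hT⟩

lemma misB (i : σ → ℕ) (hpos : ∀ s, 1 ≤ i s) :
    ∀ (F : List (List Bool)), (∀ f ∈ F, f ≠ [] ∧ f.reverse = f) →
    ∀ (q : ℕ) (R : List σ), F.flatten = List.replicate q false ++ ([true] ++ encBA i R) →
    [true] ∈ F := by
  intro F
  induction F with
  | nil =>
      intro _ q R h
      exfalso
      have := congrArg List.length h
      simp at this
  | cons f F' ih =>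
      intro hprops q R h
      have hf := hprops f (List.mem_cons_self)
      have h' : f ++ F'.flatten = List.replicate q false ++ ([true] ++ encBA i R) := by
        simpa using h
      rcases mis_step i hpos h' hf.1 hf.2 with rfl | ⟨q', R', hT⟩
      · exact List.mem_cons_self
      · exact List.mem_cons_of_mem _
          (ih (fun g hg => hprops g (List.mem_cons_of_mem _ hg)) q' R' hT)

lemma alignedA (i : σ → ℕ) (hpos : ∀ s, 1 ≤ i s) :
    ∀ (F : List (List Bool)) (S : List σ),
    F.flatten = encBA i S → (∀ f ∈ F, f ≠ [] ∧ f.reverse = f) → F.Nodup →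
    ∃ G : List (List σ), S = G.flatten ∧ F = G.map (encBA i) := by
  intro F
  induction F with
  | nil =>
      intro S h _ _
      refine ⟨[], ?_, rfl⟩
      cases S with
      | nil => rfl
      | cons s S => rw [encBA_cons] at h; exact absurd h.symm (by simp)
  | cons f F' ih =>
      intro S h hprops hnd
      have hf := hprops f (List.mem_cons_self)
      have h' : f ++ F'.flatten = encBA i S := by simpa using h
      rcases aligned_step i hpos h' hf.1 hf.2 with rfl | ⟨P, S', rfl, hPne, rfl, hT⟩
      · exfalso
        cases S with
        | nil => rw [encBA_nil] at h'; simp at h'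
        | cons s S₂ =>
            rw [encBA_cons] at h'
            have hj : F'.flatten = List.replicate (i s) false ++ ([true] ++ encBA i S₂) := by
              simpa using h'
            have hmem := misB i hpos F'
              (fun g hg => hprops g (List.mem_cons_of_mem _ hg)) (i s) S₂ hj
            exact (List.nodup_cons.mp hnd).1 hmem
      · obtain ⟨G', rfl, rfl⟩ := ih S' hT
          (fun g hg => hprops g (List.mem_cons_of_mem _ hg))
          (List.nodup_cons.mp hnd).2
        exact ⟨P :: G', by simp, by simp⟩

end Stmt8Aux

/-- Every diverse palindromic factorization of `δ(S)` is obtained by applying `δ`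
factorwise to a diverse palindromic factorization of `S`. -/
theorem stmt8 {σ : Type*} (i : σ → ℕ) (hinj : Function.Injective i)
    (hpos : ∀ s, 1 ≤ i s) (S : List σ) (F : List (List Bool))
    (hF : DivPalFact (encBA i S) F) :
    ∃ G : List (List σ), DivPalFact S G ∧ F = G.map (encBA i) := by
  obtain ⟨hjoin, hfacts, hnodup⟩ := hF
  obtain ⟨G, hGS, rfl⟩ := Stmt8Aux.alignedA i hpos F S hjoin hfacts hnodup
  refine ⟨G, ⟨hGS.symm, ?_, ?_⟩, rfl⟩
  · intro g hg
    have hmem : encBA i g ∈ G.map (encBA i) := List.mem_map_of_mem hg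
    obtain ⟨hne, hpal⟩ := hfacts _ hmem
    constructor
    · rintro rfl
      exact hne (Stmt8Aux.encBA_nil i)
    · apply Stmt8Aux.encBA_inj i hinj
      rw [← Stmt8Aux.encBA_reverse, hpal]
  · exact (List.Nodup.of_map _) hnodup
end

section
/- Let δ : Σ → {a,b}* map symbols injectively to strings b a^i b (i ≥ 1), extended homomorphically. For any string S, δ(S) has a diverse palindromic factorization if and only if S has a diverse palindromic factorization. -/
namespace Stmt9Aux

/-- `a^q`. -/
abbrev A (q : ℕ) : List Bool := List.replicate q false

/-- Encoding of a list of exponents. -/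
def encN (e : List ℕ) : List Bool := (e.map blockBA).flatten

@[simp] lemma encN_nil : encN [] = [] := rfl

lemma encN_cons (x : ℕ) (t : List ℕ) :
    encN (x :: t) = true :: (A x ++ true :: encN t) := by
  simp [encN, blockBA]

lemma encN_append (u v : List ℕ) : encN (u ++ v) = encN u ++ encN v := by
  simp [encN]

lemma A_reverse (q : ℕ) : (A q).reverse = A q := List.reverse_replicate

lemma encN_reverse (e : List ℕ) : (encN e).reverse = encN e.reverse := by
  induction e with
  | nil => rfl
  | cons x t ih =>
    rw [show (x :: t).reverse = t.reverse ++ [x] from by simp, encN_append, ← ih, encN_cons]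
    simp [encN, blockBA, A_reverse, List.reverse_append]

lemma encN_ne_nil (x : ℕ) (t : List ℕ) : encN (x :: t) ≠ [] := by
  rw [encN_cons]; simp

/-- The first `true` after a run of `false`s is a unique marker. -/
lemma markerEq : ∀ (x y : ℕ) (u v : List Bool),
    A x ++ true :: u = A y ++ true :: v → x = y ∧ u = v := by
  intro x
  induction x with
  | zero =>
    intro y u v h
    cases y with
    | zero => simpa using h
    | succ y => simp [List.replicate_succ] at h
  | succ x ih =>
    intro y u v h
    cases y with
    | zero => simp [List.replicate_succ] at h
    | succ y =>
      simp only [List.replicate_succ, List.cons_append, List.cons.injEq] at h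
      obtain ⟨xy, uv⟩ := ih y u v h.2
      exact ⟨by omega, uv⟩

lemma encN_inj : ∀ (e₁ e₂ : List ℕ), encN e₁ = encN e₂ → e₁ = e₂ := by
  intro e₁
  induction e₁ with
  | nil =>
    intro e₂ h
    cases e₂ with
    | nil => rfl
    | cons y s => exact absurd h.symm (encN_ne_nil y s)
  | cons x t ih =>
    intro e₂ h
    cases e₂ with
    | nil => exact absurd h (encN_ne_nil x t)
    | cons y s =>
      rw [encN_cons, encN_cons] at h
      obtain ⟨hx, hu⟩ := markerEq x y _ _ (by simpa using h)
      rw [hx, ih s hu]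

/-- Splitting a prefix of `a^x b u`. -/
lemma splitA : ∀ (x : ℕ) (f r u : List Bool), f ++ r = A x ++ true :: u →
    (∃ j, j ≤ x ∧ f = A j ∧ r = A (x - j) ++ true :: u) ∨
    (∃ f', f = A x ++ true :: f' ∧ f' ++ r = u) := by
  intro x
  induction x with
  | zero =>
    intro f r u h
    simp only [A, List.replicate_zero, List.nil_append] at h ⊢
    cases f with
    | nil => left; exact ⟨0, le_refl _, rfl, by simpa using h⟩
    | cons c f' =>
      right
      simp only [List.cons_append, List.cons.injEq] at h
      exact ⟨f', by rw [h.1], h.2⟩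
  | succ x ih =>
    intro f r u h
    rw [A, List.replicate_succ, List.cons_append] at h
    cases f with
    | nil =>
      left
      exact ⟨0, Nat.zero_le _, rfl, by simpa [A, List.replicate_succ] using h⟩
    | cons c f' =>
      simp only [List.cons_append, List.cons.injEq] at h
      rcases ih f' r u h.2 with ⟨j, hj, hf', hr⟩ | ⟨f'', hf', hf''⟩
      · left
        refine ⟨j + 1, by omega, ?_, ?_⟩
        · rw [h.1, hf']; simp [A, List.replicate_succ]
        · rw [hr]; congr 2; omega
      · right
        exact ⟨f'', by rw [h.1, hf']; simp [A, List.replicate_succ], hf''⟩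

/-- Classification of prefixes of `encN e`. -/
lemma PRE : ∀ (e : List ℕ) (f r : List Bool), f ++ r = encN e →
    (∃ e₁ e₂, e = e₁ ++ e₂ ∧ f = encN e₁ ∧ r = encN e₂) ∨
    (∃ e₁ x e₂ j, e = e₁ ++ x :: e₂ ∧ j ≤ x ∧
      f = encN e₁ ++ true :: A j ∧ r = A (x - j) ++ true :: encN e₂) := by
  intro e
  induction e with
  | nil =>
    intro f r h
    simp only [encN_nil, List.append_eq_nil_iff] at h
    left; exact ⟨[], [], rfl, by simp [h.1], by simp [h.2]⟩
  | cons x t ih =>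
    intro f r h
    rw [encN_cons] at h
    cases f with
    | nil =>
      left
      refine ⟨[], x :: t, rfl, rfl, ?_⟩
      simp only [List.nil_append] at h
      rw [encN_cons, ← h]
    | cons c f' =>
      simp only [List.cons_append, List.cons.injEq] at h
      rcases splitA x f' r (encN t) h.2 with ⟨j, hj, hf', hr⟩ | ⟨f'', hf', hf''⟩
      · right
        refine ⟨[], x, t, j, rfl, hj, ?_, by simpa using hr⟩
        rw [h.1, hf']; simp
      · rcases ih f'' r hf'' with ⟨e₁, e₂, he, hf₁, hr⟩ | ⟨e₁, y, e₂, j, he, hj, hf₁, hr⟩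
        · left
          refine ⟨x :: e₁, e₂, by simp [he], ?_, hr⟩
          rw [h.1, hf', hf₁, encN_cons]
        · right
          refine ⟨x :: e₁, y, e₂, j, by simp [he], hj, ?_, hr⟩
          rw [h.1, hf', hf₁, encN_cons]
          simp

/-- `true :: A j` is a palindrome only if `j = 0`. -/
lemma K2 (j : ℕ) (h : (true :: A j).reverse = true :: A j) : j = 0 := by
  by_contra hj
  obtain ⟨k, rfl⟩ : ∃ k, j = k + 1 := ⟨j - 1, by omega⟩
  rw [List.reverse_cons, A_reverse, A, List.replicate_succ, List.cons_append] at h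
  simp at h

/-- `encN e₁ ++ true :: A j` with `e₁` nonempty of positives is not a palindrome. -/
lemma K3 (e₁ : List ℕ) (j : ℕ) (hne : e₁ ≠ []) (hpos : ∀ z ∈ e₁, 1 ≤ z)
    (h : (encN e₁ ++ true :: A j).reverse = encN e₁ ++ true :: A j) : False := by
  rw [List.reverse_append, List.reverse_cons, A_reverse, encN_reverse] at h
  obtain ⟨x, t, rfl⟩ := List.exists_cons_of_ne_nil hne
  cases j with
  | succ k =>
    rw [encN_cons] at h
    rw [A, List.replicate_succ] at h
    simp at h
  | zero =>
    simp only [A, List.replicate_zero, List.nil_append] at h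
    obtain ⟨y, s, hys⟩ := List.exists_cons_of_ne_nil (l := (x :: t).reverse) (by simp)
    have hy : 1 ≤ y := by
      have : y ∈ (x :: t).reverse := by rw [hys]; exact List.mem_cons_self
      exact hpos y (List.mem_reverse.mp this)
    have hx : 1 ≤ x := hpos x (List.mem_cons_self)
    rw [hys, encN_cons, encN_cons] at h
    obtain ⟨k, rfl⟩ : ∃ k, y = k + 1 := ⟨y - 1, by omega⟩
    obtain ⟨m, rfl⟩ : ∃ m, x = m + 1 := ⟨x - 1, by omega⟩
    simp [A, List.replicate_succ] at h

/-- `A q ++ true :: encN e₁` with `q ≥ 1` is not a palindrome. -/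
lemma K4 (e₁ : List ℕ) (q : ℕ) (hq : 1 ≤ q)
    (h : (A q ++ true :: encN e₁).reverse = A q ++ true :: encN e₁) : False := by
  rw [List.reverse_append, List.reverse_cons, A_reverse, encN_reverse] at h
  obtain ⟨k, rfl⟩ : ∃ k, q = k + 1 := ⟨q - 1, by omega⟩
  cases e₁ with
  | nil => simp [List.replicate_succ] at h
  | cons x t =>
    rw [show (x :: t).reverse = t.reverse ++ [x] from by simp, encN_append] at h
    cases ht : t.reverse with
    | nil => rw [ht] at h; simp [List.replicate_succ, encN_cons] at h
    | cons y s => rw [ht] at h; simp [List.replicate_succ, encN_cons] at h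

/-- `true :: encN e₁` with `e₁` nonempty of positives is not a palindrome. -/
lemma K5 (e₁ : List ℕ) (hne : e₁ ≠ []) (hpos : ∀ z ∈ e₁, 1 ≤ z)
    (h : (true :: encN e₁).reverse = true :: encN e₁) : False := by
  rw [List.reverse_cons, encN_reverse] at h
  obtain ⟨x, t, rfl⟩ := List.exists_cons_of_ne_nil hne
  obtain ⟨y, s, hys⟩ := List.exists_cons_of_ne_nil (l := (x :: t).reverse) (by simp)
  have hy : 1 ≤ y := by
    have : y ∈ (x :: t).reverse := by rw [hys]; exact List.mem_cons_self
    exact hpos y (List.mem_reverse.mp this)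
  have hx : 1 ≤ x := hpos x (List.mem_cons_self)
  rw [hys, encN_cons, encN_cons] at h
  obtain ⟨k, rfl⟩ : ∃ k, y = k + 1 := ⟨y - 1, by omega⟩
  obtain ⟨m, rfl⟩ : ∃ m, x = m + 1 := ⟨x - 1, by omega⟩
  simp [A, List.replicate_succ] at h

/-- In state `St1`, any palindromic factorization must use the factor `[true]`. -/
lemma ST1 : ∀ (F : List (List Bool)) (q : ℕ) (e : List ℕ), (∀ z ∈ e, 1 ≤ z) →
    F.flatten = A q ++ true :: encN e → (∀ f ∈ F, f ≠ [] ∧ f.reverse = f) →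
    [true] ∈ F := by
  intro F
  induction F with
  | nil =>
    intro q e _ h _
    exact absurd h.symm (by simp)
  | cons f F' ih =>
    intro q e hpos h hpal
    replace h : f ++ F'.flatten = A q ++ true :: encN e := h
    rcases splitA q f F'.flatten (encN e) h with ⟨j, hj, hf, hr⟩ | ⟨f', hf, hf'⟩
    · exact List.mem_cons_of_mem _ (ih (q - j) e hpos hr (fun g hg => hpal g (List.mem_cons_of_mem _ hg)))
    · rcases PRE e f' F'.flatten hf' with ⟨e₁, e₂, he, hf₁, hr⟩ | ⟨e₁, x, e₂, j, he, hj, hf₁, hr⟩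
      · -- f = A q ++ true :: encN e₁ : must be [true]
        have hpf := (hpal f (List.mem_cons_self)).2
        rw [hf, hf₁] at hpf
        rcases Nat.eq_zero_or_pos q with rfl | hq
        · cases e₁ with
          | nil => rw [hf, hf₁]; simp
          | cons z s =>
            exact absurd hpf (fun hh => K5 (z :: s)
              (by simp) (fun w hw => hpos w (he ▸ List.mem_append_left _ hw)) (by simpa using hh))
        · exact absurd hpf (fun hh => K4 e₁ q hq hh)
      · -- remainder is again an St1 state
        refine List.mem_cons_of_mem _ (ih (x - j) e₂ ?_ hr
          (fun g hg => hpal g (List.mem_cons_of_mem _ hg)))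
        intro z hz
        exact hpos z (he ▸ List.mem_append_right _ (List.mem_cons_of_mem _ hz))

/-- Main structural lemma: a diverse palindromic factorization of `encN e`
is blockwise aligned. -/
lemma ST0 : ∀ (F : List (List Bool)) (e : List ℕ), (∀ z ∈ e, 1 ≤ z) →
    F.flatten = encN e → (∀ f ∈ F, f ≠ [] ∧ f.reverse = f) → F.Nodup →
    ∃ G : List (List ℕ), G.flatten = e ∧ (∀ g ∈ G, g ≠ [] ∧ g.reverse = g) ∧
      F = G.map encN := by
  intro F
  induction F with
  | nil =>
    intro e _ h _ _
    cases e with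
    | nil => exact ⟨[], rfl, by simp, rfl⟩
    | cons x t => exact absurd h.symm (encN_ne_nil x t)
  | cons f F' ih =>
    intro e hpos h hpal hnd
    replace h : f ++ F'.flatten = encN e := h
    have hfpal := hpal f (List.mem_cons_self)
    rcases PRE e f F'.flatten h with ⟨e₁, e₂, he, hf₁, hr⟩ | ⟨e₁, x, e₂, j, he, hj, hf₁, hr⟩
    · -- good case: f = encN e₁
      cases e₁ with
      | nil => exact absurd (by rw [hf₁]; rfl) hfpal.1
      | cons z s =>
        obtain ⟨G', hG'join, hG'pal, hG'map⟩ := ih e₂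
          (fun w hw => hpos w (he ▸ List.mem_append_right _ hw)) hr
          (fun g hg => hpal g (List.mem_cons_of_mem _ hg)) (List.Nodup.of_cons hnd)
        refine ⟨(z :: s) :: G', by show (z :: s) ++ G'.flatten = e; simp [hG'join, he], ?_, ?_⟩
        · intro g hg
          rcases List.mem_cons.mp hg with rfl | hg'
          · refine ⟨by simp, ?_⟩
            have := hfpal.2
            rw [hf₁, encN_reverse] at this
            exact encN_inj _ _ this
          · exact hG'pal g hg'
        · rw [List.map_cons, ← hG'map, ← hf₁]
    · -- boundary case
      cases e₁ with
      | cons z s =>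
        exact absurd (hf₁ ▸ hfpal.2)
          (fun hh => K3 (z :: s) j (by simp)
            (fun w hw => hpos w (he ▸ List.mem_append_left _ hw)) hh)
      | nil =>
        -- f = true :: A j, palindrome forces j = 0, so f = [true]
        simp only [encN_nil, List.nil_append] at hf₁
        have hj0 : j = 0 := K2 j (hf₁ ▸ hfpal.2)
        subst hj0
        have hf : f = [true] := by simpa using hf₁
        have htrue : [true] ∈ F' := by
          refine ST1 F' x e₂ ?_ (by simpa using hr)
            (fun g hg => hpal g (List.mem_cons_of_mem _ hg))
          intro w hw
          exact hpos w (he ▸ List.mem_append_right _ (List.mem_cons_of_mem _ hw))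
        rw [List.nodup_cons] at hnd
        exact absurd (hf ▸ htrue) hnd.1

lemma unmapL {σ : Type*} (f : σ → ℕ) : ∀ (L : List (List ℕ)) (S : List σ),
    S.map f = L.flatten → ∃ W : List (List σ), W.flatten = S ∧ W.map (List.map f) = L := by
  intro L
  induction L with
  | nil =>
    intro S h
    simp only [List.flatten_nil] at h
    exact ⟨[], by simpa using (List.map_eq_nil_iff.mp h).symm, rfl⟩
  | cons g L' ih =>
    intro S h
    replace h : S.map f = g ++ L'.flatten := h
    have hg : (S.take g.length).map f = g := by
      rw [List.map_take, h, List.take_left]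
    have hd : (S.drop g.length).map f = L'.flatten := by
      rw [List.map_drop, h, List.drop_left]
    obtain ⟨W', hW'j, hW'm⟩ := ih _ hd
    refine ⟨S.take g.length :: W', ?_, ?_⟩
    · show S.take g.length ++ W'.flatten = S
      rw [hW'j, List.take_append_drop]
    · show (S.take g.length).map f :: W'.map (List.map f) = g :: L'
      rw [hg, hW'm]

end Stmt9Aux

/-- `δ(S)` has a diverse palindromic factorization iff `S` has one. -/
theorem stmt9 {σ : Type*} (i : σ → ℕ) (hinj : Function.Injective i)
    (hpos : ∀ s, 1 ≤ i s) (S : List σ) :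
    (∃ F : List (List Bool), DivPalFact (encBA i S) F) ↔
    (∃ G : List (List σ), DivPalFact S G) := by
  classical
  have hmapinj : Function.Injective (List.map i) := List.map_injective_iff.mpr hinj
  have hencBA : ∀ w : List σ, encBA i w = Stmt9Aux.encN (w.map i) := by
    intro w
    simp [encBA, Stmt9Aux.encN, List.map_map]
    rfl
  constructor
  · rintro ⟨F, hjoin, hpal, hnd⟩
    obtain ⟨G, hGjoin, hGpal, hGmap⟩ := Stmt9Aux.ST0 F (S.map i)
      (by rintro z hz; obtain ⟨s, -, rfl⟩ := List.mem_map.mp hz; exact hpos s)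
      (by rw [hjoin, hencBA]) hpal hnd
    obtain ⟨W, hWjoin, hWmap⟩ := Stmt9Aux.unmapL i G S hGjoin.symm
    refine ⟨W, hWjoin, ?_, ?_⟩
    · intro w hw
      have hmem : w.map i ∈ G := by
        rw [← hWmap]
        exact List.mem_map_of_mem hw
      obtain ⟨hne, hrev⟩ := hGpal _ hmem
      refine ⟨by rintro rfl; exact hne rfl, ?_⟩
      apply hmapinj
      rw [← List.map_reverse] at hrev
      exact hrev
    · have hGnd : G.Nodup := by
        rw [hGmap] at hnd
        exact hnd.of_map _
      rw [← hWmap] at hGnd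
      exact hGnd.of_map _
  · rintro ⟨G, hjoin, hpal, hnd⟩
    refine ⟨G.map (encBA i), ?_, ?_, ?_⟩
    · have hj : ∀ G : List (List σ), (G.map (encBA i)).flatten = encBA i G.flatten := by
        intro G
        induction G with
        | nil => rfl
        | cons g G' ih =>
          show encBA i g ++ (G'.map (encBA i)).flatten = encBA i (g ++ G'.flatten)
          rw [ih, hencBA, hencBA, hencBA, List.map_append, Stmt9Aux.encN_append]
      rw [hj, hjoin]
    · intro f hf
      obtain ⟨g, hg, rfl⟩ := List.mem_map.mp hf
      obtain ⟨hne, hrev⟩ := hpal g hg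
      constructor
      · obtain ⟨s, t, rfl⟩ := List.exists_cons_of_ne_nil hne
        rw [hencBA]
        exact Stmt9Aux.encN_ne_nil _ _
      · rw [hencBA, Stmt9Aux.encN_reverse, ← List.map_reverse, hrev]
    · refine List.Nodup.map ?_ hnd
      intro u v huv
      rw [hencBA, hencBA] at huv
      exact hmapinj (Stmt9Aux.encN_inj _ _ huv)
end

section
/- The only nonempty palindromic substrings of any prefix of the infinite periodic string (abbaab)^ω of length at least 20 over {a,b} are exactly: a, b, aa, bb, aba, bab, abba, baab. -/
open List

private abbrev Bk : List Bool := [false, true, true, false, false, true]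

private lemma pal_core : ∀ {p : List Bool}, p.Palindrome → 5 ≤ p.length →
    ∃ q : List Bool, q <:+: p ∧ q.Palindrome ∧ (q.length = 5 ∨ q.length = 6) := by
  intro p hpal
  induction hpal with
  | nil => intro h; simp at h
  | singleton x => intro h; simp at h
  | cons_concat x hl ih =>
    rename_i l
    intro h5
    have hlp : (x :: (l ++ [x])).length = l.length + 2 := by simp
    by_cases h6 : l.length ≤ 4
    · exact ⟨x :: (l ++ [x]), infix_refl _, Palindrome.cons_concat x hl, by omega⟩
    · obtain ⟨q, hq1, hq2, hq3⟩ := ih (by omega)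
      exact ⟨q, hq1.trans ⟨[x], [x], rfl⟩, hq2, hq3⟩

private lemma aux6 : ∀ (n i : ℕ) (p : List Bool), p.length ≤ 6 →
    p <+: ((List.replicate n Bk).flatten).drop i → p <:+: Bk ++ Bk := by
  intro n
  induction n with
  | zero =>
    intro i p _ h
    simp only [replicate_zero, flatten_nil, drop_nil] at h
    rw [prefix_nil.mp h]
    exact nil_infix
  | succ m ih =>
    intro i p hlen h
    rw [replicate_succ, flatten_cons] at h
    by_cases hi : 6 ≤ i
    · obtain ⟨j, rfl⟩ := Nat.exists_eq_add_of_le hi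
      have heq : (Bk ++ (List.replicate m Bk).flatten).drop (6 + j)
          = ((List.replicate m Bk).flatten).drop j := by
        have := (List.drop_append (l₁ := Bk) (l₂ := (List.replicate m Bk).flatten) :
          drop (6 + j) (Bk ++ (List.replicate m Bk).flatten) = _)
        have h0 : drop (6 + j) Bk = [] := List.drop_eq_nil_of_le (by simp)
        simpa [h0] using this
      rw [heq] at h
      exact ih j p hlen h
    · push_neg at hi
      rw [drop_append_of_le_length (by simp; omega)] at h
      cases m with
      | zero =>
        simp only [replicate_zero, flatten_nil, append_nil] at h
        have hsuf : Bk.drop i <:+ Bk ++ Bk := ((drop_suffix i Bk).trans (suffix_append Bk Bk))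
        exact (h.isInfix).trans hsuf.isInfix
      | succ k =>
        rw [replicate_succ, flatten_cons, ← append_assoc] at h
        have h2 : p <+: Bk.drop i ++ Bk :=
          prefix_of_prefix_length_le h (prefix_append _ _) (by simp; omega)
        have hsuf : Bk.drop i ++ Bk <:+ Bk ++ Bk :=
          ⟨Bk.take i, by rw [← append_assoc, take_append_drop]⟩
        exact (h2.isInfix).trans hsuf.isInfix

/-- Over `Bool` with `a = false`, `b = true`: the only nonempty palindromic substrings
of any prefix of `(abbaab)^ω` of length at least 20 are exactly
`a, b, aa, bb, aba, bab, abba, baab`. -/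
theorem stmt11 (W : List Bool) (n : ℕ)
    (hpre : W <+: (List.replicate n [false, true, true, false, false, true]).flatten)
    (hlen : 20 ≤ W.length) :
    ∀ p : List Bool,
      (p ≠ [] ∧ p.reverse = p ∧ p <:+: W) ↔
        p ∈ [[false], [true], [false, false], [true, true],
             [false, true, false], [true, false, true],
             [false, true, true, false], [true, false, false, true]] := by
  replace hpre : W <+: (List.replicate n Bk).flatten := hpre
  have hn : 4 ≤ n := by
    have := hpre.length_le
    simp only [length_flatten, map_replicate] at this
    simp at this
    omega
  -- the concrete length-20 prefix
  have hT : W.take 20 = [false, true, true, false, false, true, false, true, true, false,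
      false, true, false, true, true, false, false, true, false, true] := by
    obtain ⟨t, ht⟩ := hpre
    obtain ⟨k, rfl⟩ := Nat.exists_eq_add_of_le hn
    rw [replicate_add, flatten_append] at ht
    have h20 : W.take 20
        = ((List.replicate 4 Bk).flatten ++ (List.replicate k Bk).flatten ++ t).take 20 := by
      rw [← ht, take_append_of_le_length (by simp; omega), take_append_of_le_length hlen]
    rw [h20, append_assoc, take_append_of_le_length (by simp)]
    decide
  have hTW : ([false, true, true, false, false, true, false, true, true, false,
      false, true, false, true, true, false, false, true, false, true] : List Bool) <:+: W := by
    rw [← hT]; exact (take_prefix 20 W).isInfix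
  intro p
  constructor
  · rintro ⟨hne, hpal, hinf⟩
    have hinfR : p <:+: (List.replicate n Bk).flatten := hinf.trans hpre.isInfix
    have key : ∀ q : List Bool, q <:+: (List.replicate n Bk).flatten → q.length ≤ 6 →
        q <:+: Bk ++ Bk := by
      intro q hq hql
      obtain ⟨s, t, hst⟩ := hq
      apply aux6 n s.length q hql
      rw [← hst, append_assoc, drop_left]
      exact prefix_append q t
    by_cases hlen6 : p.length ≤ 6
    · have hmem : p ∈ ((Bk ++ Bk).tails.flatMap List.inits) := by
        obtain ⟨t, h1, h2⟩ := infix_iff_prefix_suffix.mp (key p hinfR hlen6)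
        exact mem_flatMap.mpr ⟨t, (mem_tails t _).mpr h2, (mem_inits p t).mpr h1⟩
      have hdec : ∀ x ∈ ((Bk ++ Bk).tails.flatMap List.inits), x.reverse = x → x ≠ [] →
          x ∈ [[false], [true], [false, false], [true, true],
             [false, true, false], [true, false, true],
             [false, true, true, false], [true, false, false, true]] := by decide
      exact hdec p hmem hpal hne
    · exfalso
      push_neg at hlen6
      obtain ⟨q, hq1, hq2, hq3⟩ := pal_core (Palindrome.of_reverse_eq hpal) (by omega)
      have hq6 : q.length ≤ 6 := by omega
      have hqBB := key q (hq1.trans hinfR) hq6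
      have hmem : q ∈ ((Bk ++ Bk).tails.flatMap List.inits) := by
        obtain ⟨t, h1, h2⟩ := infix_iff_prefix_suffix.mp hqBB
        exact mem_flatMap.mpr ⟨t, (mem_tails t _).mpr h2, (mem_inits q t).mpr h1⟩
      have hdec : ∀ x ∈ ((Bk ++ Bk).tails.flatMap List.inits), x.reverse = x →
          ¬(x.length = 5 ∨ x.length = 6) := by decide
      exact hdec q hmem hq2.reverse_eq hq3
  · intro hp
    fin_cases hp <;>
      exact ⟨by decide, by decide, IsInfix.trans (by decide) hTW⟩
end

section
/- For any string S over alphabet Σ and fresh distinct symbols $, # ∉ Σ, and a distinguished symbol a with companion symbols ā and x_a: the string S · $ · # · x_a a x_a ā x_a has a diverse palindromic factorization if and only if S has one; moreover every diverse palindromic factorization of the extended string ends with either ($, #, x_a, a, x_a ā x_a) or ($, #, x_a a x_a, ā, x_a), provided x_a, a, ā do not occur in S. -/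
section Helpers18
open List

variable {α : Type*}

lemma unique_split {c : α} : ∀ {A : List α} {B C D : List α},
    A ++ c :: B = C ++ c :: D → c ∉ A → c ∉ C → A = C ∧ B = D := by
  intro A
  induction A with
  | nil =>
    intro B C D h hA hC
    cases C with
    | nil => simpa using h
    | cons x C' =>
      simp only [List.nil_append, List.cons_append, List.cons.injEq] at h
      exact absurd (h.1 ▸ (List.mem_cons_self : x ∈ x :: C')) hC
  | cons y A' ih =>
    intro B C D h hA hC
    cases C with
    | nil =>
      simp only [List.cons_append, List.nil_append, List.cons.injEq] at h
      exact absurd (h.1 ▸ (List.mem_cons_self : y ∈ y :: A')) hA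
    | cons x C' =>
      simp only [List.cons_append, List.cons.injEq] at h
      obtain ⟨rfl, h2⟩ := h
      have hA' : c ∉ A' := fun hc => hA (List.mem_cons_of_mem _ hc)
      have hC' : c ∉ C' := fun hc => hC (List.mem_cons_of_mem _ hc)
      obtain ⟨rfl, rfl⟩ := ih h2 hA' hC'
      exact ⟨rfl, rfl⟩

lemma pal_center {u v : List α} {c : α}
    (hpal : (u ++ c :: v).reverse = u ++ c :: v) (hu : c ∉ u) (hv : c ∉ v) :
    v = u.reverse := by
  have h : v.reverse ++ c :: u.reverse = u ++ c :: v := by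
    simpa [List.reverse_append] using hpal
  have := unique_split h (by simpa using hv) hu
  rw [← this.1]; simp

lemma join_nil_of_ne {F : List (List α)} (h : F.flatten = [])
    (hne : ∀ f ∈ F, f ≠ []) : F = [] := by
  cases F with
  | nil => rfl
  | cons p F' =>
    simp only [List.flatten_cons, List.append_eq_nil_iff] at h
    exact absurd h.1 (hne p (by simp))

lemma extract {c : α} {F : List (List α)} {S rest : List α}
    (hjoin : F.flatten = S ++ c :: rest)
    (hpal : ∀ f ∈ F, f.reverse = f)
    (hcS : c ∉ S) (hcrest : c ∉ rest) :
    ∃ F1 u F2, F = F1 ++ (u ++ c :: u.reverse) :: F2 ∧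
      F1.flatten ++ u = S ∧ u.reverse ++ F2.flatten = rest := by
  classical
  have hc : c ∈ F.flatten := by rw [hjoin]; simp
  obtain ⟨f, hfF, hcf⟩ := List.mem_flatten.mp hc
  obtain ⟨F1, F2, hF⟩ := List.append_of_mem hfF
  obtain ⟨u, v, hf⟩ := List.append_of_mem hcf
  subst hF hf
  have hjoin' : (F1.flatten ++ u) ++ c :: (v ++ F2.flatten) = S ++ c :: rest := by
    simpa using hjoin
  have hcount := congrArg (List.count c) hjoin'
  simp only [List.count_append, List.count_cons_self] at hcount
  rw [List.count_eq_zero_of_not_mem hcS, List.count_eq_zero_of_not_mem hcrest] at hcount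
  have hF1c : c ∉ F1.flatten := by
    rw [← List.count_eq_zero]; omega
  have huc : c ∉ u := by rw [← List.count_eq_zero]; omega
  have hvc : c ∉ v := by rw [← List.count_eq_zero]; omega
  have hF2c : c ∉ F2.flatten := by rw [← List.count_eq_zero]; omega
  have hsp := unique_split hjoin' (by simp [hF1c, huc]) hcS
  have hpalf : (u ++ c :: v).reverse = u ++ c :: v := hpal _ (by simp)
  have hv : v = u.reverse := pal_center hpalf huc hvc
  subst hv
  exact ⟨F1, u, F2, rfl, hsp.1, hsp.2⟩

lemma fact_one {x : α} : ∀ {F : List (List α)}, F.flatten = [x] →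
    (∀ f ∈ F, f ≠ []) → F = [[x]] := by
  intro F
  cases F with
  | nil => intro h; simp at h
  | cons p F' =>
    intro h hne
    cases p with
    | nil => exact absurd rfl (hne [] (by simp))
    | cons y p' =>
      simp only [List.flatten_cons, List.cons_append, List.cons.injEq] at h
      obtain ⟨rfl, h2⟩ := h
      simp only [List.append_eq_nil_iff] at h2
      obtain ⟨rfl, h3⟩ := h2
      have : F' = [] := join_nil_of_ne h3 (fun f hf => hne f (by simp [hf]))
      subst this; rfl

lemma fact_two {b x : α} (hbx : b ≠ x) {F : List (List α)}
    (hjoin : F.flatten = [b, x])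
    (hpal : ∀ f ∈ F, f ≠ [] ∧ f.reverse = f) : F = [[b], [x]] := by
  cases F with
  | nil => simp at hjoin
  | cons p F' =>
    cases p with
    | nil => exact absurd rfl (hpal [] (by simp)).1
    | cons y p' =>
      simp only [List.flatten_cons, List.cons_append, List.cons.injEq] at hjoin
      obtain ⟨rfl, h2⟩ := hjoin
      cases p' with
      | nil =>
        simp only [List.nil_append] at h2
        have : F' = [[x]] := fact_one h2 (fun f hf => (hpal f (by simp [hf])).1)
        subst this; rfl
      | cons z p'' =>
        have hp := (hpal (y :: z :: p'') (by simp)).2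
        simp only [List.cons_append, List.cons.injEq] at h2
        obtain ⟨rfl, h3⟩ := h2
        simp only [List.append_eq_nil_iff] at h3
        obtain ⟨rfl, _⟩ := h3
        simp at hp
        exact absurd hp.1.symm hbx

lemma fact_three {x b : α} (hxb : x ≠ b) {F : List (List α)}
    (hjoin : F.flatten = [x, b, x])
    (hpal : ∀ f ∈ F, f ≠ [] ∧ f.reverse = f)
    (hnd : F.Nodup) : F = [[x, b, x]] := by
  cases F with
  | nil => simp at hjoin
  | cons p F' =>
    cases p with
    | nil => exact absurd rfl (hpal [] (by simp)).1
    | cons y p' =>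
      simp only [List.flatten_cons, List.cons_append, List.cons.injEq] at hjoin
      obtain ⟨rfl, h2⟩ := hjoin
      cases p' with
      | nil =>
        -- first factor [x], remainder joins to [b, x]
        simp only [List.nil_append] at h2
        have hF' := fact_two (Ne.symm hxb) h2 (fun f hf => hpal f (by simp [hf]))
        subst hF'
        simp at hnd
      | cons z p'' =>
        simp only [List.cons_append, List.cons.injEq] at h2
        obtain ⟨rfl, h3⟩ := h2
        cases p'' with
        | nil =>
          -- first factor [x, b] : not a palindrome
          have hp := (hpal (y :: z :: []) (by simp)).2
          simp at hp
          exact absurd hp.1.symm hxb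
        | cons w p''' =>
          simp only [List.cons_append, List.cons.injEq] at h3
          obtain ⟨rfl, h4⟩ := h3
          simp only [List.append_eq_nil_iff] at h4
          obtain ⟨rfl, h5⟩ := h4
          have : F' = [] := join_nil_of_ne h5 (fun f hf => (hpal f (by simp [hf])).1)
          subst this; rfl

lemma main_struct {S : List α} {dol hash xa a ab : α}
    (hdh : dol ≠ hash) (hdx : dol ≠ xa) (hda : dol ≠ a) (hdab : dol ≠ ab)
    (hhx : hash ≠ xa) (hha : hash ≠ a) (hhab : hash ≠ ab)
    (hxa : xa ≠ a) (hxab : xa ≠ ab) (haab : a ≠ ab)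
    (hd : dol ∉ S) (hh : hash ∉ S)
    {F : List (List α)} (hF : DivPalFact (S ++ [dol, hash, xa, a, xa, ab, xa]) F) :
    ∃ G, DivPalFact S G ∧
      (F = G ++ [[dol], [hash], [xa], [a], [xa, ab, xa]] ∨
       F = G ++ [[dol], [hash], [xa, a, xa], [ab], [xa]]) := by
  obtain ⟨hjoin, hpal, hnd⟩ := hF
  -- Step 1 : the factor containing `dol` is `[dol]`.
  have hjoin1 : F.flatten = S ++ dol :: [hash, xa, a, xa, ab, xa] := by simpa using hjoin
  obtain ⟨F1, u1, F2, hFeq, h1, h2⟩ := extract hjoin1 (fun f hf => (hpal f hf).2) hd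
    (by simp [hdh, hdx, hda, hdab])
  have hu1 : u1 = [] := by
    rcases hru : u1.reverse with _ | ⟨y, w⟩
    · simpa using congrArg List.reverse hru
    · rw [hru] at h2
      simp only [List.cons_append, List.cons.injEq] at h2
      have : hash ∈ u1 := by
        rw [← List.mem_reverse, hru, h2.1]; simp
      exact absurd (h1 ▸ List.mem_append_right F1.flatten this) hh
  subst hu1
  simp only [List.append_nil, List.reverse_nil, List.nil_append] at h1 h2 hFeq
  -- sublist facts
  have hF1sub : F1 <+ F := by
    rw [hFeq]; exact List.sublist_append_left _ _
  have hF2sub : F2 <+ F := by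
    rw [hFeq]; exact (List.sublist_cons_self _ _).trans (List.sublist_append_right _ _)
  -- Step 2 : the factor containing `hash` is `[hash]`.
  have hjoin2 : F2.flatten = [] ++ hash :: [xa, a, xa, ab, xa] := by simpa using h2
  obtain ⟨F3, u2, F4, hF2eq, h3, h4⟩ := extract hjoin2
    (fun f hf => (hpal f (hF2sub.subset hf)).2) (by simp)
    (by simp [hhx, hha, hhab])
  simp only [List.append_eq_nil_iff] at h3
  obtain ⟨h3a, rfl⟩ := h3
  have hF3 : F3 = [] := by
    apply join_nil_of_ne h3a
    intro f hf
    exact (hpal f (hF2sub.subset (hF2eq ▸ List.mem_append_left _ hf))).1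
  subst hF3
  simp only [List.nil_append, List.reverse_nil] at hF2eq h4
  have hF4sub : F4 <+ F := ((List.sublist_cons_self _ _).trans (hF2eq ▸ hF2sub : _ <+ F))
  -- Step 3 : the factor containing `a`.
  have hjoin4 : F4.flatten = [xa] ++ a :: [xa, ab, xa] := by simpa using h4
  obtain ⟨F5, u3, F6, hF4eq, h5, h6⟩ := extract hjoin4
    (fun f hf => (hpal f (hF4sub.subset hf)).2) (by simp [Ne.symm hxa])
    (by simp [Ne.symm hxa, haab])
  have hF5sub : F5 <+ F := (List.sublist_append_left _ _).trans (hF4eq ▸ hF4sub : _ <+ F)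
  have hF6sub : F6 <+ F := ((List.sublist_cons_self _ _).trans
    (List.sublist_append_right _ _)).trans (hF4eq ▸ hF4sub : _ <+ F)
  have hG : DivPalFact S F1 :=
    ⟨h1, fun f hf => hpal f (hF1sub.subset hf), hnd.sublist hF1sub⟩
  cases u3 with
  | nil =>
    simp only [List.append_nil, List.reverse_nil, List.nil_append] at h5 h6 hF4eq
    have hF5 : F5 = [[xa]] := fact_one h5
      (fun f hf => (hpal f (hF5sub.subset hf)).1)
    have hF6 : F6 = [[xa, ab, xa]] := fact_three hxab h6
      (fun f hf => hpal f (hF6sub.subset hf)) (hnd.sublist hF6sub)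
    refine ⟨F1, hG, Or.inl ?_⟩
    rw [hFeq, hF2eq, hF4eq, hF5, hF6]
    simp
  | cons y u3' =>
    have hl := congrArg List.length h5
    simp only [List.length_append, List.length_cons, List.length_nil] at hl
    have h5a : F5.flatten = [] := List.length_eq_zero_iff.mp (by omega)
    have h5b : u3' = [] := List.length_eq_zero_iff.mp (by omega)
    subst h5b
    have hF5 : F5 = [] := by
      apply join_nil_of_ne h5a
      intro f hf
      exact (hpal f (hF5sub.subset hf)).1
    subst hF5
    simp only [List.flatten_nil, List.nil_append, List.cons.injEq] at h5
    obtain ⟨hy, -⟩ := h5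
    rw [hy] at h6 hF4eq
    have h6' : F6.flatten = [ab, xa] := by
      simpa using h6
    have hF6 : F6 = [[ab], [xa]] := fact_two (Ne.symm hxab) h6'
      (fun f hf => hpal f (hF6sub.subset hf))
    refine ⟨F1, hG, Or.inr ?_⟩
    rw [hFeq, hF2eq, hF4eq, hF6]
    simp

end Helpers18

/-- For fresh pairwise distinct symbols `$`, `#`, `x_a`, `a`, `ā` not occurring in `S`,
the string `S · $ · # · x_a a x_a ā x_a` has a diverse palindromic factorization iff `S`
has one, and every diverse palindromic factorization of the extended string ends with
`($, #, x_a, a, x_a ā x_a)` or `($, #, x_a a x_a, ā, x_a)`. -/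
theorem stmt18 {α : Type*} (S : List α) (dol hash xa a ab : α)
    (hdist : List.Nodup [dol, hash, xa, a, ab])
    (hd : dol ∉ S) (hh : hash ∉ S) (hx : xa ∉ S) (ha : a ∉ S) (hab : ab ∉ S) :
    ((∃ F : List (List α),
        DivPalFact (S ++ [dol, hash, xa, a, xa, ab, xa]) F) ↔
      (∃ G : List (List α), DivPalFact S G)) ∧
    (∀ F : List (List α),
      DivPalFact (S ++ [dol, hash, xa, a, xa, ab, xa]) F →
        ∃ G : List (List α),
          F = G ++ [[dol], [hash], [xa], [a], [xa, ab, xa]] ∨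
          F = G ++ [[dol], [hash], [xa, a, xa], [ab], [xa]]) := by
  simp only [List.nodup_cons, List.mem_cons, List.not_mem_nil, or_false, not_or,
    List.nodup_nil, and_true] at hdist
  obtain ⟨⟨hdh, hdx, hda, hdab⟩, ⟨hhx, hha, hhab⟩, ⟨hxa, hxab⟩, haab, -⟩ := hdist
  constructor
  · constructor
    · rintro ⟨F, hF⟩
      obtain ⟨G, hG, -⟩ := main_struct hdh hdx hda hdab hhx hha hhab hxa hxab haab hd hh hF
      exact ⟨G, hG⟩
    · rintro ⟨G, hGj, hGp, hGnd⟩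
      refine ⟨G ++ [[dol], [hash], [xa], [a], [xa, ab, xa]], ?_, ?_, ?_⟩
      · simp [hGj]
      · intro f hf
        rcases List.mem_append.mp hf with h | h
        · exact hGp f h
        · simp only [List.mem_cons, List.not_mem_nil, or_false] at h
          rcases h with rfl | rfl | rfl | rfl | rfl <;> simp
      · rw [List.nodup_append']
        refine ⟨hGnd, ?_, ?_⟩
        · simp [hdh, hdx, hda, hdab, hhx, hha, hhab, hxa, hxab, haab]
        · intro g hg
          have hsub : ∀ x ∈ g, x ∈ S := fun x hxg => hGj ▸ List.mem_flatten.mpr ⟨g, hg, hxg⟩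
          simp only [List.mem_cons, List.not_mem_nil, or_false, not_or]
          rintro (rfl | rfl | rfl | rfl | rfl)
          · exact hd (hsub dol (by simp))
          · exact hh (hsub hash (by simp))
          · exact hx (hsub xa (by simp))
          · exact ha (hsub a (by simp))
          · exact hx (hsub xa (by simp))
  · intro F hF
    obtain ⟨G, -, h⟩ := main_struct hdh hdx hda hdab hhx hha hhab hxa hxab haab hd hh hF
    exact ⟨G, h⟩
end
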